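/- For all labels x and y and all nested sequents X and Y, if X and Y are display equivalent then the labeled polytrees 𝔏ₓ(X) and 𝔏_y(Y) are isomorphic as labeled graphs. -/
import Mathlib


set_option autoImplicit false

/-! # Common definitions: tense logics, nested/labeled/display calculi
    (following Ciabattoni, Lyon, Ramanayake, Tiu,
     "Display to Labeled Proofs and Back Again for Tense Logics") -/

/-- Diamonds: `wd` = ◇ (white diamond), `bd` = ◆ (black diamond). -/
inductive Dmd : Type
  | wd
  | bd
deriving DecidableEq, Repr

/-- Tense formulae in negation normal form:
    `A ::= p | p̄ | A ∧ A | A ∨ A | □A | ◇A | ■A | ◆A`. -/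
inductive Formula : Type
  | pos : Nat → Formula      -- propositional variable p
  | neg : Nat → Formula      -- negated propositional variable p̄
  | and : Formula → Formula → Formula
  | or : Formula → Formula → Formula
  | box : Formula → Formula   -- □
  | dia : Formula → Formula   -- ◇
  | bbox : Formula → Formula  -- ■
  | bdia : Formula → Formula  -- ◆
deriving DecidableEq, Repr

/-- The De Morgan dual `Ā` of a formula `A`. -/
def Formula.dual : Formula → Formula
  | .pos p => .neg p
  | .neg p => .pos p
  | .and A B => .or A.dual B.dual
  | .or A B => .and A.dual B.dual
  | .box A => .dia A.dual
  | .dia A => .box A.dual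
  | .bbox A => .bdia A.dual
  | .bdia A => .bbox A.dual

/-- `A → B` is defined as `Ā ∨ B`. -/
def Formula.imp (A B : Formula) : Formula := A.dual.or B

/-- `A ↔ B` is defined as `(A → B) ∧ (B → A)`. -/
def Formula.iffF (A B : Formula) : Formula := (A.imp B).and (B.imp A)

/-- `⟨?⟩A` for a diamond `⟨?⟩ ∈ {◇, ◆}`. -/
def dmdF : Dmd → Formula → Formula
  | .wd, A => .dia A
  | .bd, A => .bdia A

/-- `⟨?⟩₁…⟨?⟩ₘ A` for a string of diamonds. -/
def applyDmds : List Dmd → Formula → Formula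
  | [], A => A
  | d :: ds, A => dmdF d (applyDmds ds A)

/-- A general path axiom `ΠA → ΣA`, given by the strings `Π` (ant) and `Σ` (suc). -/
structure GenPath : Type where
  ant : List Dmd
  suc : List Dmd

/-- A path axiom `ΠA → ⟨?⟩A`. -/
structure PathAx : Type where
  ant : List Dmd
  suc : Dmd
deriving DecidableEq

/-- Every path axiom is a general path axiom. -/
def pathToGen (F : PathAx) : GenPath := ⟨F.ant, [F.suc]⟩

/-- All instances `ΠA → ΣA` of the general path axioms in `GP`. -/
def gpInstances (GP : Set GenPath) : Set Formula :=
  {F | ∃ gp ∈ GP, ∃ A : Formula, F = (applyDmds gp.ant A).imp (applyDmds gp.suc A)}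

/-- The Hilbert system `Kt + S`: classical propositional axioms, modus ponens,
    the tense axioms, and necessitation for □ and ■, plus the axioms in `S`. -/
inductive KtProof (S : Set Formula) : Formula → Prop
  | ax {A : Formula} : A ∈ S → KtProof S A
  | pl1 (A B : Formula) : KtProof S (A.imp (B.imp A))
  | pl2 (A B : Formula) : KtProof S ((B.dual.imp A.dual).imp (A.imp B))
  | pl3 (A B C : Formula) :
      KtProof S ((A.imp (B.imp C)).imp ((A.imp B).imp (A.imp C)))
  | tense1 (A : Formula) : KtProof S (A.imp (Formula.box (Formula.bdia A)))
  | tense2 (A : Formula) : KtProof S (A.imp (Formula.bbox (Formula.dia A)))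
  | kbox (A B : Formula) :
      KtProof S ((Formula.box (A.imp B)).imp ((Formula.box A).imp (Formula.box B)))
  | kbbox (A B : Formula) :
      KtProof S ((Formula.bbox (A.imp B)).imp ((Formula.bbox A).imp (Formula.bbox B)))
  | boxdual (A : Formula) :
      KtProof S ((Formula.box A).iffF (Formula.dia A.dual).dual)
  | bboxdual (A : Formula) :
      KtProof S ((Formula.bbox A).iffF (Formula.bdia A.dual).dual)
  | mp {A B : Formula} : KtProof S (A.imp B) → KtProof S A → KtProof S B
  | necbox {A : Formula} : KtProof S A → KtProof S (Formula.box A)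
  | necbbox {A : Formula} : KtProof S A → KtProof S (Formula.bbox A)

/-! ## Nested sequents -/

/-- Nested sequents: `X ::= ε | A | X, X | ∘{X} | •{X}`. -/
inductive NSeq : Type
  | empty
  | fml : Formula → NSeq
  | comma : NSeq → NSeq → NSeq
  | white : NSeq → NSeq   -- ∘{X}
  | black : NSeq → NSeq   -- •{X}
deriving DecidableEq, Repr

/-- Comma is associative and commutative with unit ε: the induced congruence. -/
inductive NEquiv : NSeq → NSeq → Prop
  | refl (X : NSeq) : NEquiv X X
  | symm {X Y : NSeq} : NEquiv X Y → NEquiv Y X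
  | trans {X Y Z : NSeq} : NEquiv X Y → NEquiv Y Z → NEquiv X Z
  | comm (X Y : NSeq) : NEquiv (X.comma Y) (Y.comma X)
  | assoc (X Y Z : NSeq) : NEquiv ((X.comma Y).comma Z) (X.comma (Y.comma Z))
  | unit (X : NSeq) : NEquiv (X.comma NSeq.empty) X
  | commaCongr {X X' Y Y' : NSeq} :
      NEquiv X X' → NEquiv Y Y' → NEquiv (X.comma Y) (X'.comma Y')
  | whiteCongr {X Y : NSeq} : NEquiv X Y → NEquiv X.white Y.white
  | blackCongr {X Y : NSeq} : NEquiv X Y → NEquiv X.black Y.black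

/-- `★₁{… ★ₙ{Y} …}` where `★ⱼ = ∘` if `⟨?⟩ⱼ = ◇` and `★ⱼ = •` if `⟨?⟩ⱼ = ◆`. -/
def nestDmds : List Dmd → NSeq → NSeq
  | [], Y => Y
  | .wd :: ds, Y => (nestDmds ds Y).white
  | .bd :: ds, Y => (nestDmds ds Y).black

/-- The structural rules `NestSt(GP)` (premise, conclusion): for each
    `ΠA → ΣA ∈ GP`, from `X, ★Σ{Y}` infer `X, ★Π{Y}`. -/
def NestSt (GP : Set GenPath) : NSeq → NSeq → Prop :=
  fun prem concl => ∃ gp ∈ GP, ∃ X Y : NSeq,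
    prem = X.comma (nestDmds gp.suc Y) ∧ concl = X.comma (nestDmds gp.ant Y)

/-- The empty set of extension rules on nested sequents. -/
def NoNest : NSeq → NSeq → Prop := fun _ _ => False

/-- The shallow nested (display) calculus `SKT` extended with the
    structural rules `Ext` (relating premise to conclusion); nested sequents are
    treated up to the congruence `NEquiv` (comma is AC with unit ε). -/
inductive SKT (Ext : NSeq → NSeq → Prop) : NSeq → Prop
  | id (X : NSeq) (p : Nat) :
      SKT Ext ((X.comma (.fml (.pos p))).comma (.fml (.neg p)))
  | orR {X : NSeq} {A B : Formula} :
      SKT Ext (X.comma ((NSeq.fml A).comma (.fml B))) →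
      SKT Ext (X.comma (.fml (.or A B)))
  | andR {X : NSeq} {A B : Formula} :
      SKT Ext (X.comma (.fml A)) → SKT Ext (X.comma (.fml B)) →
      SKT Ext (X.comma (.fml (.and A B)))
  | ctr {X Y : NSeq} : SKT Ext (X.comma (Y.comma Y)) → SKT Ext (X.comma Y)
  | wk {X Y : NSeq} : SKT Ext X → SKT Ext (X.comma Y)
  | rf {X Y : NSeq} : SKT Ext (X.comma Y.white) → SKT Ext (X.black.comma Y)
  | rp {X Y : NSeq} : SKT Ext (X.comma Y.black) → SKT Ext (X.white.comma Y)
  | bbox {X : NSeq} {A : Formula} :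
      SKT Ext (X.comma (NSeq.fml A).black) → SKT Ext (X.comma (.fml (.bbox A)))
  | box {X : NSeq} {A : Formula} :
      SKT Ext (X.comma (NSeq.fml A).white) → SKT Ext (X.comma (.fml (.box A)))
  | bdia {X Y : NSeq} {A : Formula} :
      SKT Ext ((X.comma (Y.comma (.fml A)).black).comma (.fml (.bdia A))) →
      SKT Ext ((X.comma Y.black).comma (.fml (.bdia A)))
  | dia {X Y : NSeq} {A : Formula} :
      SKT Ext ((X.comma (Y.comma (.fml A)).white).comma (.fml (.dia A))) →
      SKT Ext ((X.comma Y.white).comma (.fml (.dia A)))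
  | ext {X Y : NSeq} : Ext X Y → SKT Ext X → SKT Ext Y
  | equiv {X Y : NSeq} : SKT Ext X → NEquiv X Y → SKT Ext Y

/-! ## Deep nested calculus -/

/-- One-hole contexts over nested sequents (up to `NEquiv` this suffices). -/
inductive Ctx : Type
  | hole
  | commaL : Ctx → NSeq → Ctx
  | white : Ctx → Ctx
  | black : Ctx → Ctx

/-- Filling the hole of a context with a nested sequent. -/
def Ctx.fill : Ctx → NSeq → NSeq
  | .hole, X => X
  | .commaL C Y, X => (C.fill X).comma Y
  | .white C, X => (C.fill X).white
  | .black C, X => (C.fill X).black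

/-- The deep nested calculus `DKT` extended with rules `Ext`
    (premise, conclusion); sequents are treated up to `NEquiv`. -/
inductive DKT (Ext : NSeq → NSeq → Prop) : NSeq → Prop
  | id (C : Ctx) (p : Nat) :
      DKT Ext (C.fill ((NSeq.fml (.pos p)).comma (.fml (.neg p))))
  | andD {C : Ctx} {Y : NSeq} {A B : Formula} :
      DKT Ext (C.fill ((NSeq.fml A).comma Y)) →
      DKT Ext (C.fill ((NSeq.fml B).comma Y)) →
      DKT Ext (C.fill ((NSeq.fml (.and A B)).comma Y))
  | orD {C : Ctx} {Y : NSeq} {A B : Formula} :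
      DKT Ext (C.fill ((NSeq.fml A).comma ((NSeq.fml B).comma Y))) →
      DKT Ext (C.fill ((NSeq.fml (.or A B)).comma Y))
  | bboxD {C : Ctx} {A : Formula} :
      DKT Ext (C.fill ((NSeq.fml (.bbox A)).comma (NSeq.fml A).black)) →
      DKT Ext (C.fill (.fml (.bbox A)))
  | boxD {C : Ctx} {A : Formula} :
      DKT Ext (C.fill ((NSeq.fml (.box A)).comma (NSeq.fml A).white)) →
      DKT Ext (C.fill (.fml (.box A)))
  | bdia1 {C : Ctx} {Y : NSeq} {A : Formula} :
      DKT Ext (C.fill ((Y.comma (.fml A)).black.comma (.fml (.bdia A)))) →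
      DKT Ext (C.fill (Y.black.comma (.fml (.bdia A))))
  | bdia2 {C : Ctx} {Y : NSeq} {A : Formula} :
      DKT Ext (C.fill ((Y.comma (.fml (.bdia A))).white.comma (.fml A))) →
      DKT Ext (C.fill ((Y.comma (.fml (.bdia A))).white))
  | dia1 {C : Ctx} {Y : NSeq} {A : Formula} :
      DKT Ext (C.fill ((Y.comma (.fml A)).white.comma (.fml (.dia A)))) →
      DKT Ext (C.fill (Y.white.comma (.fml (.dia A))))
  | dia2 {C : Ctx} {Y : NSeq} {A : Formula} :
      DKT Ext (C.fill ((Y.comma (.fml (.dia A))).black.comma (.fml A))) →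
      DKT Ext (C.fill ((Y.comma (.fml (.dia A))).black))
  | ext {X Y : NSeq} : Ext X Y → DKT Ext X → DKT Ext Y
  | equiv {X Y : NSeq} : DKT Ext X → NEquiv X Y → DKT Ext Y

/-! ## Display rules and display equivalence -/

/-- `DisplayDeriv X Z`: `Z` is derivable from `X` using only the display rules
    (rf) and (rp) (and rearrangement by the comma-congruence `NEquiv`). -/
inductive DisplayDeriv : NSeq → NSeq → Prop
  | refl (X : NSeq) : DisplayDeriv X X
  | equiv {X Y Z : NSeq} : NEquiv X Y → DisplayDeriv Y Z → DisplayDeriv X Z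
  | rf {X Y Z : NSeq} :
      DisplayDeriv (X.black.comma Y) Z → DisplayDeriv (X.comma Y.white) Z
  | rp {X Y Z : NSeq} :
      DisplayDeriv (X.white.comma Y) Z → DisplayDeriv (X.comma Y.black) Z

/-- Two nested sequents are display equivalent when each is derivable from the
    other using only the display rules. -/
def DisplayEquiv (X Y : NSeq) : Prop := DisplayDeriv X Y ∧ DisplayDeriv Y X

/-! ## Labeled sequents and the labeled calculus G3Kt -/

abbrev Label : Type := Nat

/-- A set of relational atoms `Rxy`. -/
abbrev RelSet : Type := Finset (Label × Label)

/-- A labeled sequent `R, Γ`. -/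
abbrev LSeq : Type := RelSet × Multiset (Label × Formula)

/-- The label `z` occurs in the labeled sequent `S`. -/
def occursLS (z : Label) (S : LSeq) : Prop :=
  (∃ w, (z, w) ∈ S.1 ∨ (w, z) ∈ S.1) ∨ ∃ A, (z, A) ∈ S.2

/-- `R_◇ x y := Rxy` and `R_◆ x y := Ryx`. -/
def relAtom : Dmd → Label → Label → Label × Label
  | .wd, x, y => (x, y)
  | .bd, x, y => (y, x)

/-- Relational atoms of a `Π`-chain through the list of labels `ls`. -/
def chainAtoms : List Dmd → List Label → List (Label × Label)
  | d :: ds, a :: b :: rest => relAtom d a b :: chainAtoms ds (b :: rest)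
  | _, _ => []

/-- `ls` is a chain of labels for the diamond string `ds` from `x` to `y`
    (an empty string forces `x = y`). -/
def IsChainList (ds : List Dmd) (x y : Label) (ls : List Label) : Prop :=
  ls.length = ds.length + 1 ∧ ls.head? = some x ∧ ls.getLast? = some y

/-- The structural rules `LabSt(GP)` (premise, conclusion): for `ΠA → ΣA ∈ GP`,
    from `R, R_Π x y, R_Σ x y, Γ` infer `R, R_Π x y, Γ`, where all labels in
    `R_Σ x y` other than `x, y` are eigenvariables. -/
def LabSt (GP : Set GenPath) : LSeq → LSeq → Prop :=
  fun prem concl => ∃ gp ∈ GP,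
    ∃ (R : RelSet) (Γ : Multiset (Label × Formula)) (x y : Label)
      (als sls : List Label),
      IsChainList gp.ant x y als ∧ IsChainList gp.suc x y sls ∧
      concl = (R ∪ (chainAtoms gp.ant als).toFinset, Γ) ∧
      prem = (R ∪ (chainAtoms gp.ant als).toFinset ∪
                (chainAtoms gp.suc sls).toFinset, Γ) ∧
      (∀ z ∈ sls, z ≠ x → z ≠ y → ¬ occursLS z concl)

/-- The empty set of extension rules on labeled sequents. -/
def NoExt : LSeq → LSeq → Prop := fun _ _ => False

/-- Derivations in the labeled calculus `G3Kt` extended with rules `Ext`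
    (relating premise to conclusion). -/
inductive G3KtD (Ext : LSeq → LSeq → Prop) :
    RelSet → Multiset (Label × Formula) → Type
  | id (R : RelSet) (Γ : Multiset (Label × Formula)) (x : Label) (p : Nat) :
      G3KtD Ext R ((x, .pos p) ::ₘ (x, .neg p) ::ₘ Γ)
  | orR (R : RelSet) (Γ : Multiset (Label × Formula)) (x : Label) (A B : Formula)
      (D : G3KtD Ext R ((x, A) ::ₘ (x, B) ::ₘ Γ)) :
      G3KtD Ext R ((x, .or A B) ::ₘ Γ)
  | andR (R : RelSet) (Γ : Multiset (Label × Formula)) (x : Label) (A B : Formula)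
      (D1 : G3KtD Ext R ((x, A) ::ₘ Γ)) (D2 : G3KtD Ext R ((x, B) ::ₘ Γ)) :
      G3KtD Ext R ((x, .and A B) ::ₘ Γ)
  | boxR (R : RelSet) (Γ : Multiset (Label × Formula)) (x y : Label) (A : Formula)
      (hy : ¬ occursLS y (R, (x, Formula.box A) ::ₘ Γ))
      (D : G3KtD Ext (insert (x, y) R) ((y, A) ::ₘ Γ)) :
      G3KtD Ext R ((x, .box A) ::ₘ Γ)
  | diaR (R : RelSet) (Γ : Multiset (Label × Formula)) (x y : Label) (A : Formula)
      (h : (x, y) ∈ R)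
      (D : G3KtD Ext R ((y, A) ::ₘ (x, Formula.dia A) ::ₘ Γ)) :
      G3KtD Ext R ((x, .dia A) ::ₘ Γ)
  | bboxR (R : RelSet) (Γ : Multiset (Label × Formula)) (x y : Label) (A : Formula)
      (hy : ¬ occursLS y (R, (x, Formula.bbox A) ::ₘ Γ))
      (D : G3KtD Ext (insert (y, x) R) ((y, A) ::ₘ Γ)) :
      G3KtD Ext R ((x, .bbox A) ::ₘ Γ)
  | bdiaR (R : RelSet) (Γ : Multiset (Label × Formula)) (x y : Label) (A : Formula)
      (h : (y, x) ∈ R)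
      (D : G3KtD Ext R ((y, A) ::ₘ (x, Formula.bdia A) ::ₘ Γ)) :
      G3KtD Ext R ((x, .bdia A) ::ₘ Γ)
  | ext (R' : RelSet) (Γ' : Multiset (Label × Formula))
      (R : RelSet) (Γ : Multiset (Label × Formula))
      (h : Ext (R', Γ') (R, Γ)) (D : G3KtD Ext R' Γ') : G3KtD Ext R Γ

/-- Derivability in `G3Kt + Ext`. -/
def G3KtDeriv (Ext : LSeq → LSeq → Prop) (R : RelSet)
    (Γ : Multiset (Label × Formula)) : Prop :=
  Nonempty (G3KtD Ext R Γ)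

/-- `Q` holds of every labeled sequent occurring in the derivation `D`
    (including the end sequent). -/
def G3KtD.allSeq {Ext : LSeq → LSeq → Prop} (Q : LSeq → Prop) :
    ∀ {R : RelSet} {Γ : Multiset (Label × Formula)}, G3KtD Ext R Γ → Prop
  | _, _, .id R Γ x p => Q (R, (x, .pos p) ::ₘ (x, .neg p) ::ₘ Γ)
  | _, _, .orR R Γ x A B D => Q (R, (x, .or A B) ::ₘ Γ) ∧ D.allSeq Q
  | _, _, .andR R Γ x A B D1 D2 =>
      Q (R, (x, .and A B) ::ₘ Γ) ∧ D1.allSeq Q ∧ D2.allSeq Q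
  | _, _, .boxR R Γ x _ A _ D => Q (R, (x, .box A) ::ₘ Γ) ∧ D.allSeq Q
  | _, _, .diaR R Γ x _ A _ D => Q (R, (x, .dia A) ::ₘ Γ) ∧ D.allSeq Q
  | _, _, .bboxR R Γ x _ A _ D => Q (R, (x, .bbox A) ::ₘ Γ) ∧ D.allSeq Q
  | _, _, .bdiaR R Γ x _ A _ D => Q (R, (x, .bdia A) ::ₘ Γ) ∧ D.allSeq Q
  | _, _, .ext _ _ R Γ _ D => Q (R, Γ) ∧ D.allSeq Q

/-! ## Paths, inverses, compositions, completion, propagation rules -/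

/-- The inverse of a diamond: `◇⁻¹ = ◆` and `◆⁻¹ = ◇`. -/
def Dmd.inv : Dmd → Dmd
  | .wd => .bd
  | .bd => .wd

/-- The inverse `I(F)` of a path axiom `F`. -/
def PathAx.inv (F : PathAx) : PathAx := ⟨(F.ant.map Dmd.inv).reverse, F.suc.inv⟩

/-- `I(P)`, the set of inverses of the path axioms in `P`. -/
def invSet (P : Set PathAx) : Set PathAx := {F | ∃ G ∈ P, F = G.inv}

/-- The completion `P*`: the smallest set of path axioms containing `P`,
    containing `◇A → ◇A` and `◆A → ◆A`, and closed under compositions. -/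
inductive Completion (P : Set PathAx) : PathAx → Prop
  | base {F : PathAx} : F ∈ P → Completion P F
  | wrefl : Completion P ⟨[Dmd.wd], Dmd.wd⟩
  | brefl : Completion P ⟨[Dmd.bd], Dmd.bd⟩
  | comp {F G : PathAx} (i : Nat) (hi : i < G.ant.length) :
      Completion P F → Completion P G → G.ant.get ⟨i, hi⟩ = F.suc →
      Completion P ⟨G.ant.take i ++ F.ant ++ G.ant.drop (i + 1), G.suc⟩

/-- `(P ∪ I(P))*`. -/
def PStar (P : Set PathAx) : PathAx → Prop := Completion (P ∪ invSet P)

/-- A path from `x` to `y` with the given string of diamonds in the propagation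
    graph determined by the edge set `E`: each `Rxy` contributes the labeled
    edges `(x, y, ◇)` and `(y, x, ◆)`. -/
inductive LPath (E : Finset (Label × Label)) : Label → Label → List Dmd → Prop
  | nil (x : Label) : LPath E x x []
  | fwd {x z y : Label} {ds : List Dmd} :
      (x, z) ∈ E → LPath E z y ds → LPath E x y (Dmd.wd :: ds)
  | bwd {x z y : Label} {ds : List Dmd} :
      (z, x) ∈ E → LPath E z y ds → LPath E x y (Dmd.bd :: ds)

/-- The labeled propagation rules `LabPr(P)` (premise, conclusion):
    from `R, x:⟨?⟩A, y:A, Γ` infer `R, x:⟨?⟩A, Γ`, provided there is a path `π`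
    from `x` to `y` in the propagation graph of the premise whose string `Π`
    satisfies `ΠA → ⟨?⟩A ∈ (P ∪ I(P))*`. -/
def LabPr (P : Set PathAx) : LSeq → LSeq → Prop :=
  fun prem concl =>
    ∃ (R : RelSet) (Γ : Multiset (Label × Formula)) (x y : Label)
      (A : Formula) (d : Dmd) (Pi : List Dmd),
      prem = (R, (x, dmdF d A) ::ₘ (y, A) ::ₘ Γ) ∧
      concl = (R, (x, dmdF d A) ::ₘ Γ) ∧
      LPath R x y Pi ∧ PStar P ⟨Pi, d⟩

/-! ## Labeled graphs, labeled polytrees, and the translations 𝔏 and 𝔑 -/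

/-- A labeled graph `(V, E, L)`: vertices decorated with multisets of formulae. -/
structure LGraph : Type where
  V : Finset Label
  E : Finset (Label × Label)
  L : Label → Multiset Formula

/-- Union of labeled graphs (multiset union of labels at shared vertices). -/
def LGraph.union (G H : LGraph) : LGraph :=
  ⟨G.V ∪ H.V, G.E ∪ H.E, fun z => G.L z + H.L z⟩

/-- Isomorphism of labeled graphs: a bijection between the vertex sets
    preserving edges and vertex labels. -/
def LGraph.Iso (G H : LGraph) : Prop :=
  ∃ f : Label → Label, Set.BijOn f ↑G.V ↑H.V ∧
    (∀ u ∈ G.V, ∀ v ∈ G.V, ((u, v) ∈ G.E ↔ (f u, f v) ∈ H.E)) ∧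
    (∀ v ∈ G.V, G.L v = H.L (f v))

/-- A labeled graph is a labeled polytree when its underlying undirected
    graph is a tree. -/
def LGraph.IsPolytree (G : LGraph) : Prop :=
  (∀ x y : Label, (x, y) ∈ G.E → (y, x) ∉ G.E) ∧
  (∀ e ∈ G.E, e.1 ∈ G.V ∧ e.2 ∈ G.V) ∧
  ((SimpleGraph.fromRel fun a b => (a, b) ∈ G.E).induce (↑G.V : Set Label)).IsTree

/-- The translation `𝔏ₓ` from nested sequents to labeled graphs (relational,
    since fresh vertices may be chosen arbitrarily): `LabT x X G` states that
    `G` is a labeled graph obtained by translating `X` starting at vertex `x`. -/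
inductive LabT : Label → NSeq → LGraph → Prop
  | empty (x : Label) : LabT x .empty ⟨∅, ∅, fun _ => 0⟩
  | fml (x : Label) (A : Formula) :
      LabT x (.fml A) ⟨{x}, ∅, fun z => if z = x then {A} else 0⟩
  | comma {x : Label} {X Y : NSeq} {G H : LGraph} :
      LabT x X G → LabT x Y H → G.V ∩ H.V ⊆ {x} →
      LabT x (X.comma Y) (G.union H)
  | white {x y : Label} {X : NSeq} {G : LGraph} :
      LabT y X G → x ∉ G.V → x ≠ y →
      LabT x X.white ⟨insert x (insert y G.V), insert (x, y) G.E, G.L⟩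
  | black {x y : Label} {X : NSeq} {G : LGraph} :
      LabT y X G → x ∉ G.V → x ≠ y →
      LabT x X.black ⟨insert x (insert y G.V), insert (y, x) G.E, G.L⟩

/-- The translation `𝔑ₓ` from labeled polytrees (rooted at a chosen vertex `x`)
    to nested sequents: the inverse of the translation `𝔏ₓ`. -/
def NTrans (x : Label) (G : LGraph) (X : NSeq) : Prop := LabT x X G

/-- The labeled graph of a labeled sequent `R, Γ`: vertices are the occurring
    labels, edges are given by `R`, and each vertex `x` is labeled by the
    multiset `{A | x:A ∈ Γ}`. -/
def toLGraph (R : RelSet) (Γ : Multiset (Label × Formula)) : LGraph where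
  V := R.image Prod.fst ∪ R.image Prod.snd ∪ (Γ.map Prod.fst).toFinset
  E := R
  L := fun z => (Γ.filter fun p => p.1 = z).map Prod.snd

/-- The multiset of labeled formulae of a labeled graph, read as a sequent. -/
def LGraph.toSeqGamma (G : LGraph) : Multiset (Label × Formula) :=
  G.V.val.bind fun v => (G.L v).map fun A => (v, A)

/-- The set of labels occurring in a labeled sequent. -/
def seqLabels (R : RelSet) (Γ : Multiset (Label × Formula)) : Set Label :=
  {z | (∃ w, (z, w) ∈ R ∨ (w, z) ∈ R) ∨ ∃ A, (z, A) ∈ Γ}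

/-- `R, Γ` is a labeled polytree sequent: its underlying undirected graph
    (on the occurring labels) is a tree. -/
def IsPolytreeSeq (R : RelSet) (Γ : Multiset (Label × Formula)) : Prop :=
  (∀ x y : Label, (x, y) ∈ R → (y, x) ∉ R) ∧
  ((SimpleGraph.fromRel fun a b => (a, b) ∈ R).induce (seqLabels R Γ)).IsTree

/-- The labeled edges `(u, v, ◇)` and `(v, u, ◆)` of the propagation graph
    determined by an edge set. -/
def propEdges (E : Finset (Label × Label)) : Set (Label × Label × Dmd) :=
  {e | ∃ u v : Label, (u, v) ∈ E ∧ (e = (u, v, Dmd.wd) ∨ e = (v, u, Dmd.bd))}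

/-- The deep propagation rules `DeepPr(P)` (premise, conclusion), expressed via
    the labeled polytree representation of nested sequents: from
    `X[⟨?⟩A]ᵢ[A]ⱼ` infer `X[⟨?⟩A]ᵢ[∅]ⱼ`, provided there is a path from node `i`
    (= `u`) to node `j` (= `v`) in the propagation graph of the premise whose
    string `Π` satisfies `ΠA → ⟨?⟩A ∈ (P ∪ I(P))*`. -/
def DeepPrL (P : Set PathAx) : NSeq → NSeq → Prop :=
  fun prem concl =>
    ∃ (r : Label) (G : LGraph) (u v : Label) (A : Formula) (d : Dmd)
      (Pi : List Dmd),
      LabT r prem G ∧ LPath G.E u v Pi ∧ PStar P ⟨Pi, d⟩ ∧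
      dmdF d A ∈ G.L u ∧ A ∈ G.L v ∧
      LabT r concl ⟨G.V, G.E, fun z => if z = v then (G.L v).erase A else G.L z⟩

/-- Substitution of the label `y` by the label `x`. -/
def subLabel (x y z : Label) : Label := if z = y then x else z

/-! ## Auxiliary lemmas for the isomorphism theorem -/

lemma lg_ext {G H : LGraph} (hV : G.V = H.V) (hE : G.E = H.E) (hL : G.L = H.L) :
    G = H := by
  cases G; cases H; simp_all

lemma labT_endpoints {x : Label} {X : NSeq} {G : LGraph} (h : LabT x X G) :
    ∀ a b : Label, (a, b) ∈ G.E → a ∈ G.V ∧ b ∈ G.V := by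
  induction h with
  | empty => simp
  | fml => simp
  | comma hG hH hsub ihG ihH =>
      intro a b hab
      simp only [LGraph.union, Finset.mem_union] at hab ⊢
      rcases hab with h | h
      · exact ⟨Or.inl (ihG a b h).1, Or.inl (ihG a b h).2⟩
      · exact ⟨Or.inr (ihH a b h).1, Or.inr (ihH a b h).2⟩
  | white hG hx hxy ih =>
      intro a b hab
      simp only [Finset.mem_insert] at hab ⊢
      rcases hab with h | h
      · refine ⟨?_, ?_⟩ <;> simp [Prod.ext_iff] at h <;> tauto
      · exact ⟨Or.inr (Or.inr (ih a b h).1), Or.inr (Or.inr (ih a b h).2)⟩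
  | black hG hx hxy ih =>
      intro a b hab
      simp only [Finset.mem_insert] at hab ⊢
      rcases hab with h | h
      · refine ⟨?_, ?_⟩ <;> simp [Prod.ext_iff] at h <;> tauto
      · exact ⟨Or.inr (Or.inr (ih a b h).1), Or.inr (Or.inr (ih a b h).2)⟩

lemma labT_no_loop {x : Label} {X : NSeq} {G : LGraph} (h : LabT x X G) :
    ∀ z : Label, (z, z) ∉ G.E := by
  induction h with
  | empty => simp
  | fml => simp
  | comma hG hH hsub ihG ihH =>
      intro z hz
      simp only [LGraph.union, Finset.mem_union] at hz
      rcases hz with h | h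
      · exact ihG z h
      · exact ihH z h
  | white hG hx hxy ih =>
      intro z hz
      simp only [Finset.mem_insert] at hz
      rcases hz with h | h
      · exact hxy ((Prod.ext_iff.mp h).1.symm.trans (Prod.ext_iff.mp h).2)
      · exact ih z h
  | black hG hx hxy ih =>
      intro z hz
      simp only [Finset.mem_insert] at hz
      rcases hz with h | h
      · exact hxy ((Prod.ext_iff.mp h).2.symm.trans (Prod.ext_iff.mp h).1)
      · exact ih z h

lemma labT_L_out {x : Label} {X : NSeq} {G : LGraph} (h : LabT x X G) :
    ∀ z : Label, z ∉ G.V → G.L z = 0 := by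
  induction h with
  | empty => simp
  | fml x A => intro z hz; simp at hz; simp [hz]
  | comma hG hH hsub ihG ihH =>
      intro z hz
      simp only [LGraph.union, Finset.mem_union, not_or] at hz
      simp [LGraph.union, ihG z hz.1, ihH z hz.2]
  | white hG hx hxy ih =>
      intro z hz
      simp only [Finset.mem_insert, not_or] at hz
      exact ih z hz.2.2
  | black hG hx hxy ih =>
      intro z hz
      simp only [Finset.mem_insert, not_or] at hz
      exact ih z hz.2.2

/-- Root-preserving isomorphism of labeled graphs. -/
def IsoRoot (x y : Label) (G H : LGraph) (f : Label → Label) : Prop :=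
  Set.BijOn f ↑G.V ↑H.V ∧
    (∀ u ∈ G.V, ∀ v ∈ G.V, ((u, v) ∈ G.E ↔ (f u, f v) ∈ H.E)) ∧
    (∀ v ∈ G.V, G.L v = H.L (f v)) ∧
    (∀ z ∈ G.V, (f z = y ↔ z = x))

lemma isoRoot_memIff {x y : Label} {G H : LGraph} {f : Label → Label}
    (h : IsoRoot x y G H f) : x ∈ G.V ↔ y ∈ H.V := by
  obtain ⟨hb, -, -, hr⟩ := h
  constructor
  · intro hx
    have : f x = y := (hr x hx).mpr rfl
    have := hb.mapsTo (by simpa using hx)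
    simpa [this] using ‹f x = y› ▸ this
  · intro hy
    obtain ⟨z, hz, hfz⟩ := hb.surjOn (by simpa using hy)
    have hz' : z ∈ G.V := by simpa using hz
    have := (hr z hz').mp hfz
    exact this ▸ hz'

lemma labT_isoRoot : ∀ (X : NSeq) (x y : Label) (G H : LGraph),
    LabT x X G → LabT y X H → ∃ f, IsoRoot x y G H f := by
  intro X
  induction X with
  | empty =>
      intro x y G H hG hH
      cases hG; cases hH
      refine ⟨fun _ => y, ?_, ?_, ?_, ?_⟩ <;> simp [Set.BijOn, Set.MapsTo, Set.InjOn, Set.SurjOn]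
  | fml A =>
      intro x y G H hG hH
      cases hG; cases hH
      refine ⟨fun _ => y, ⟨?_, ?_, ?_⟩, ?_, ?_, ?_⟩
      · intro z hz; simp
      · intro a ha b hb _; simp at ha hb; rw [ha, hb]
      · intro w hw; simp at hw; subst hw; exact ⟨x, by simp⟩
      · simp
      · intro v hv; simp at hv; simp [hv]
      · intro z hz; simp at hz; simp [hz]
  | comma X₁ X₂ ih1 ih2 =>
      intro x y G H hG hH
      cases hG with
      | comma hG1 hG2 hGi =>
      cases hH with
      | comma hH1 hH2 hHi =>
      rename_i G1 G2 H1 H2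
      obtain ⟨f1, b1, e1, l1, r1⟩ := ih1 x y G1 H1 hG1 hH1
      obtain ⟨f2, b2, e2, l2, r2⟩ := ih2 x y G2 H2 hG2 hH2
      have m1 : x ∈ G1.V ↔ y ∈ H1.V := isoRoot_memIff ⟨b1, e1, l1, r1⟩
      have m2 : x ∈ G2.V ↔ y ∈ H2.V := isoRoot_memIff ⟨b2, e2, l2, r2⟩
      have hGi' : ∀ z, z ∈ G1.V → z ∈ G2.V → z = x := by
        intro z h1 h2
        have := hGi (Finset.mem_inter.mpr ⟨h1, h2⟩); simpa using this
      have hHi' : ∀ z, z ∈ H1.V → z ∈ H2.V → z = y := by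
        intro z h1 h2
        have := hHi (Finset.mem_inter.mpr ⟨h1, h2⟩); simpa using this
      have map1 : ∀ z, z ∈ G1.V → f1 z ∈ H1.V := fun z hz => by
        simpa using b1.mapsTo (by simpa using hz)
      have map2 : ∀ z, z ∈ G2.V → f2 z ∈ H2.V := fun z hz => by
        simpa using b2.mapsTo (by simpa using hz)
      have inj1 : ∀ z w, z ∈ G1.V → w ∈ G1.V → f1 z = f1 w → z = w := fun z w hz hw h =>
        b1.injOn (by simpa using hz) (by simpa using hw) h
      have inj2 : ∀ z w, z ∈ G2.V → w ∈ G2.V → f2 z = f2 w → z = w := fun z w hz hw h =>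
        b2.injOn (by simpa using hz) (by simpa using hw) h
      have surj1 : ∀ w, w ∈ H1.V → ∃ z, z ∈ G1.V ∧ f1 z = w := by
        intro w hw
        obtain ⟨z, hz, hfz⟩ := b1.surjOn (by simpa using hw)
        exact ⟨z, by simpa using hz, hfz⟩
      have surj2 : ∀ w, w ∈ H2.V → ∃ z, z ∈ G2.V ∧ f2 z = w := by
        intro w hw
        obtain ⟨z, hz, hfz⟩ := b2.surjOn (by simpa using hw)
        exact ⟨z, by simpa using hz, hfz⟩
      classical
      refine ⟨fun z => if z ∈ G1.V then f1 z else f2 z, ?_⟩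
      set f : Label → Label := fun z => if z ∈ G1.V then f1 z else f2 z with hf
      have fG1 : ∀ z, z ∈ G1.V → f z = f1 z := by intro z hz; simp [hf, hz]
      have fG2 : ∀ z, z ∈ G2.V → f z = f2 z := by
        intro z hz
        by_cases h : z ∈ G1.V
        · have hzx : z = x := hGi' z h hz
          subst hzx
          have e1x : f1 z = y := (r1 z h).mpr rfl
          have e2x : f2 z = y := (r2 z hz).mpr rfl
          simp [hf, h, e1x, e2x]
        · simp [hf, h]
      have memG : ∀ z, z ∈ (G1.union G2).V ↔ (z ∈ G1.V ∨ z ∈ G2.V) := by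
        intro z; simp [LGraph.union]
      have memH : ∀ z, z ∈ (H1.union H2).V ↔ (z ∈ H1.V ∨ z ∈ H2.V) := by
        intro z; simp [LGraph.union]
      refine ⟨⟨?_, ?_, ?_⟩, ?_, ?_, ?_⟩
      · -- MapsTo
        intro z hz
        have hz' : z ∈ G1.V ∨ z ∈ G2.V := (memG z).mp (by simpa using hz)
        rcases hz' with h | h
        · have := map1 z h; simp [fG1 z h, memH, this]
        · have := map2 z h; simp [fG2 z h, memH, this]
      · -- InjOn
        intro z hz w hw hzw
        have hz' : z ∈ G1.V ∨ z ∈ G2.V := (memG z).mp (by simpa using hz)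
        have hw' : w ∈ G1.V ∨ w ∈ G2.V := (memG w).mp (by simpa using hw)
        rcases hz' with h1 | h1 <;> rcases hw' with h2 | h2
        · exact inj1 z w h1 h2 (by rwa [fG1 z h1, fG1 w h2] at hzw)
        · rw [fG1 z h1, fG2 w h2] at hzw
          have hin : f1 z = y := hHi' (f1 z) (map1 z h1) (hzw ▸ map2 w h2)
          have hz1 : z = x := (r1 z h1).mp hin
          have hw1 : w = x := (r2 w h2).mp (hzw ▸ hin)
          rw [hz1, hw1]
        · rw [fG2 z h1, fG1 w h2] at hzw
          have hin : f1 w = y := hHi' (f1 w) (map1 w h2) (hzw ▸ map2 z h1)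
          have hw1 : w = x := (r1 w h2).mp hin
          have hz1 : z = x := (r2 z h1).mp (hzw.trans hin)
          rw [hz1, hw1]
        · exact inj2 z w h1 h2 (by rwa [fG2 z h1, fG2 w h2] at hzw)
      · -- SurjOn
        intro w hw
        have hw' : w ∈ H1.V ∨ w ∈ H2.V := (memH w).mp (by simpa using hw)
        rcases hw' with h | h
        · obtain ⟨z, hz, hfz⟩ := surj1 w h
          exact ⟨z, by simp [memG, hz], by rw [fG1 z hz]; exact hfz⟩
        · obtain ⟨z, hz, hfz⟩ := surj2 w h
          exact ⟨z, by simp [memG, hz], by rw [fG2 z hz]; exact hfz⟩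
      · -- edges
        intro u hu v hv
        have hu' : u ∈ G1.V ∨ u ∈ G2.V := (memG u).mp hu
        have hv' : v ∈ G1.V ∨ v ∈ G2.V := (memG v).mp hv
        have epH1 := labT_endpoints hH1
        have epH2 := labT_endpoints hH2
        have epG1 := labT_endpoints hG1
        have epG2 := labT_endpoints hG2
        constructor
        · intro h
          rcases (by simpa [LGraph.union] using h : (u, v) ∈ G1.E ∨ (u, v) ∈ G2.E) with h | h
          · have hu1 := (epG1 u v h).1
            have hv1 := (epG1 u v h).2
            rw [fG1 u hu1, fG1 v hv1]
            simp [LGraph.union, (e1 u hu1 v hv1).mp h]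
          · have hu1 := (epG2 u v h).1
            have hv1 := (epG2 u v h).2
            rw [fG2 u hu1, fG2 v hv1]
            simp [LGraph.union, (e2 u hu1 v hv1).mp h]
        · intro h
          rcases (by simpa [LGraph.union] using h :
              (f u, f v) ∈ H1.E ∨ (f u, f v) ∈ H2.E) with h | h
          · -- show u, v ∈ G1.V
            have hu1 : u ∈ G1.V := by
              by_contra hu1
              have hu2 : u ∈ G2.V := hu'.resolve_left hu1
              have hfu : f u = f2 u := fG2 u hu2
              have h1 : f2 u ∈ H1.V := hfu ▸ (epH1 _ _ h).1
              have h2 : f2 u ∈ H2.V := map2 u hu2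
              have : f2 u = y := hHi' _ h1 h2
              have hux : u = x := (r2 u hu2).mp this
              exact hu1 (hux ▸ m1.mpr (this ▸ h1))
            have hv1 : v ∈ G1.V := by
              by_contra hv1
              have hv2 : v ∈ G2.V := hv'.resolve_left hv1
              have hfv : f v = f2 v := fG2 v hv2
              have h1 : f2 v ∈ H1.V := hfv ▸ (epH1 _ _ h).2
              have h2 : f2 v ∈ H2.V := map2 v hv2
              have : f2 v = y := hHi' _ h1 h2
              have hvx : v = x := (r2 v hv2).mp this
              exact hv1 (hvx ▸ m1.mpr (this ▸ h1))
            rw [fG1 u hu1, fG1 v hv1] at h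
            simp [LGraph.union, (e1 u hu1 v hv1).mpr h]
          · have hu2 : u ∈ G2.V := by
              by_contra hu2
              have hu1 : u ∈ G1.V := hu'.resolve_right hu2
              have hfu : f u = f1 u := fG1 u hu1
              have h2 : f1 u ∈ H2.V := hfu ▸ (epH2 _ _ h).1
              have h1 : f1 u ∈ H1.V := map1 u hu1
              have : f1 u = y := hHi' _ h1 h2
              have hux : u = x := (r1 u hu1).mp this
              exact hu2 (hux ▸ m2.mpr (this ▸ h2))
            have hv2 : v ∈ G2.V := by
              by_contra hv2
              have hv1 : v ∈ G1.V := hv'.resolve_right hv2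
              have hfv : f v = f1 v := fG1 v hv1
              have h2 : f1 v ∈ H2.V := hfv ▸ (epH2 _ _ h).2
              have h1 : f1 v ∈ H1.V := map1 v hv1
              have : f1 v = y := hHi' _ h1 h2
              have hvx : v = x := (r1 v hv1).mp this
              exact hv2 (hvx ▸ m2.mpr (this ▸ h2))
            rw [fG2 u hu2, fG2 v hv2] at h
            simp [LGraph.union, (e2 u hu2 v hv2).mpr h]
      · -- labels
        intro v hv
        have hv' : v ∈ G1.V ∨ v ∈ G2.V := (memG v).mp hv
        show G1.L v + G2.L v = H1.L (f v) + H2.L (f v)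
        by_cases h1 : v ∈ G1.V <;> by_cases h2 : v ∈ G2.V
        · have hvx : v = x := hGi' v h1 h2
          rw [fG1 v h1, (r1 v h1).mpr hvx]
          have := l1 v h1
          have := l2 v h2
          rw [l1 v h1, l2 v h2, (r1 v h1).mpr hvx, (r2 v h2).mpr hvx]
        · rw [fG1 v h1, l1 v h1, labT_L_out hG2 v h2]
          have hout : f1 v ∉ H2.V := by
            intro hin
            have : f1 v = y := hHi' _ (map1 v h1) hin
            have hvx : v = x := (r1 v h1).mp this
            exact h2 (hvx ▸ m2.mpr (this ▸ hin))
          rw [labT_L_out hH2 _ hout]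
        · rw [fG2 v h2, l2 v h2, labT_L_out hG1 v h1]
          have hout : f2 v ∉ H1.V := by
            intro hin
            have : f2 v = y := hHi' _ hin (map2 v h2)
            have hvx : v = x := (r2 v h2).mp this
            exact h1 (hvx ▸ m1.mpr (this ▸ hin))
          rw [labT_L_out hH1 _ hout]
        · tauto
      · -- root condition
        intro z hz
        have hz' : z ∈ G1.V ∨ z ∈ G2.V := (memG z).mp hz
        by_cases h1 : z ∈ G1.V
        · rw [fG1 z h1]; exact r1 z h1
        · have h2 : z ∈ G2.V := hz'.resolve_left h1
          rw [fG2 z h2]; exact r2 z h2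
  | white X₁ ih =>
      intro x y G H hG hH
      cases hG with
      | @white _ y0 _ G0 hG0 hx0 hxy0 =>
      cases hH with
      | @white _ y1 _ H0 hH0 hy0 hyy1 =>
      obtain ⟨f0, b0, e0, l0, r0⟩ := ih y0 y1 G0 H0 hG0 hH0
      have m0 : y0 ∈ G0.V ↔ y1 ∈ H0.V := isoRoot_memIff ⟨b0, e0, l0, r0⟩
      have map0 : ∀ z, z ∈ G0.V → f0 z ∈ H0.V := fun z hz => by
        simpa using b0.mapsTo (by simpa using hz)
      have inj0 : ∀ z w, z ∈ G0.V → w ∈ G0.V → f0 z = f0 w → z = w := fun z w hz hw h =>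
        b0.injOn (by simpa using hz) (by simpa using hw) h
      have surj0 : ∀ w, w ∈ H0.V → ∃ z, z ∈ G0.V ∧ f0 z = w := by
        intro w hw
        obtain ⟨z, hz, hfz⟩ := b0.surjOn (by simpa using hw)
        exact ⟨z, by simpa using hz, hfz⟩
      classical
      refine ⟨fun z => if z = x then y else if z = y0 then y1 else f0 z, ?_⟩
      set f : Label → Label := fun z => if z = x then y else if z = y0 then y1 else f0 z
        with hf
      have fx : f x = y := by simp [hf]
      have fy0 : f y0 = y1 := by
        by_cases h : y0 = x
        · exact absurd h.symm hxy0
        · simp [hf, h]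
      have fG0 : ∀ z, z ∈ G0.V → f z = f0 z := by
        intro z hz
        have hzx : z ≠ x := fun h => hx0 (h ▸ hz)
        by_cases hzy : z = y0
        · subst hzy
          rw [fy0]
          exact ((r0 z hz).mpr rfl).symm
        · simp [hf, hzx, hzy]
      refine ⟨⟨?_, ?_, ?_⟩, ?_, ?_, ?_⟩
      · -- MapsTo
        intro z hz
        simp only [Finset.coe_insert, Set.mem_insert_iff, Finset.mem_coe] at hz ⊢
        rcases hz with h | h | h
        · subst h; simp [fx]
        · subst h; simp [fy0]
        · simp [fG0 z h, map0 z h]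
      · -- InjOn
        intro z hz w hw hzw
        simp only [Finset.coe_insert, Set.mem_insert_iff, Finset.mem_coe] at hz hw
        have hy1H : y ∉ H0.V := hy0
        have classify : ∀ a, a = x ∨ a = y0 ∨ a ∈ G0.V →
            (a = x) ∨ (a ∈ G0.V) ∨ (a = y0 ∧ a ∉ G0.V) := by
          intro a ha
          by_cases hg : a ∈ G0.V
          · exact Or.inr (Or.inl hg)
          · rcases ha with h | h | h
            · exact Or.inl h
            · exact Or.inr (Or.inr ⟨h, hg⟩)
            · exact absurd h hg
        rcases classify z hz with h1 | h1 | h1 <;> rcases classify w hw with h2 | h2 | h2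
        · rw [h1, h2]
        · exfalso; rw [h1, fx, fG0 w h2] at hzw
          exact hy1H (hzw ▸ map0 w h2)
        · exfalso; rw [h1, fx, h2.1, fy0] at hzw
          exact hyy1 hzw
        · exfalso; rw [h2, fx, fG0 z h1] at hzw
          exact hy1H (hzw ▸ map0 z h1)
        · exact inj0 z w h1 h2 (by rwa [fG0 z h1, fG0 w h2] at hzw)
        · rw [fG0 z h1, h2.1, fy0] at hzw
          have := (r0 z h1).mp hzw
          rw [this, h2.1]
        · exfalso; rw [h1.1, fy0, h2, fx] at hzw
          exact hyy1 hzw.symm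
        · rw [h1.1, fy0, fG0 w h2] at hzw
          have := (r0 w h2).mp hzw.symm
          rw [h1.1, this]
        · rw [h1.1, h2.1]
      · -- SurjOn
        intro w hw
        simp only [Finset.coe_insert, Set.mem_insert_iff, Finset.mem_coe] at hw ⊢
        rcases hw with h | h | h
        · exact ⟨x, Or.inl rfl, h ▸ fx⟩
        · exact ⟨y0, Or.inr (Or.inl rfl), h ▸ fy0⟩
        · obtain ⟨z, hz, hfz⟩ := surj0 w h
          exact ⟨z, Or.inr (Or.inr hz), (fG0 z hz).trans hfz⟩
      · -- edges
        intro u hu v hv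
        simp only [Finset.mem_insert] at hu hv
        have epG0 := labT_endpoints hG0
        have epH0 := labT_endpoints hH0
        constructor
        · intro h
          simp only [Finset.mem_insert] at h ⊢
          rcases h with h | h
          · have h1 : u = x := (Prod.ext_iff.mp h).1
            have h2 : v = y0 := (Prod.ext_iff.mp h).2
            left; rw [h1, h2, fx, fy0]
          · have hu0 := (epG0 u v h).1
            have hv0 := (epG0 u v h).2
            right; rw [fG0 u hu0, fG0 v hv0]
            exact (e0 u hu0 v hv0).mp h
        · intro h
          simp only [Finset.mem_insert] at h ⊢
          rcases h with h | h
          · have hfu : f u = y := (Prod.ext_iff.mp h).1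
            have hfv : f v = y1 := (Prod.ext_iff.mp h).2
            have hux : u = x := by
              rcases hu with h' | h' | h'
              · exact h'
              · exfalso; rw [h', fy0] at hfu; exact hyy1 hfu.symm
              · exfalso; rw [fG0 u h'] at hfu; exact hy0 (hfu ▸ map0 u h')
            have hvy0 : v = y0 := by
              rcases hv with h' | h' | h'
              · exfalso; rw [h', fx] at hfv; exact hyy1 hfv
              · exact h'
              · rw [fG0 v h'] at hfv; exact (r0 v h').mp hfv
            left; rw [hux, hvy0]
          · have hfu0 : f u ∈ H0.V := (epH0 _ _ h).1
            have hfv0 : f v ∈ H0.V := (epH0 _ _ h).2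
            have hu0 : u ∈ G0.V := by
              rcases hu with h' | h' | h'
              · exfalso; rw [h', fx] at hfu0; exact hy0 hfu0
              · by_cases hg : u ∈ G0.V
                · exact hg
                · exfalso; rw [h', fy0] at hfu0
                  exact (h' ▸ hg) (m0.mpr hfu0)
              · exact h'
            have hv0 : v ∈ G0.V := by
              rcases hv with h' | h' | h'
              · exfalso; rw [h', fx] at hfv0; exact hy0 hfv0
              · by_cases hg : v ∈ G0.V
                · exact hg
                · exfalso; rw [h', fy0] at hfv0
                  exact (h' ▸ hg) (m0.mpr hfv0)
              · exact h'
            rw [fG0 u hu0, fG0 v hv0] at h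
            right; exact (e0 u hu0 v hv0).mpr h
      · -- labels
        intro v hv
        simp only [Finset.mem_insert] at hv
        show G0.L v = H0.L (f v)
        by_cases hg : v ∈ G0.V
        · rw [fG0 v hg]; exact l0 v hg
        · rw [labT_L_out hG0 v hg]
          rcases hv with h | h | h
          · rw [h, fx, labT_L_out hH0 y hy0]
          · rw [h, fy0, labT_L_out hH0 y1 (fun hh => (h ▸ hg) (m0.mpr hh))]
          · exact absurd h hg
      · -- root condition
        intro z hz
        simp only [Finset.mem_insert] at hz
        constructor
        · intro h
          rcases hz with h' | h' | h'
          · exact h'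
          · exfalso; rw [h', fy0] at h; exact hyy1 h.symm
          · exfalso; rw [fG0 z h'] at h; exact hy0 (h ▸ map0 z h')
        · intro h; exact h ▸ fx
  | black X₁ ih =>
      intro x y G H hG hH
      cases hG with
      | @black _ y0 _ G0 hG0 hx0 hxy0 =>
      cases hH with
      | @black _ y1 _ H0 hH0 hy0 hyy1 =>
      obtain ⟨f0, b0, e0, l0, r0⟩ := ih y0 y1 G0 H0 hG0 hH0
      have m0 : y0 ∈ G0.V ↔ y1 ∈ H0.V := isoRoot_memIff ⟨b0, e0, l0, r0⟩
      have map0 : ∀ z, z ∈ G0.V → f0 z ∈ H0.V := fun z hz => by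
        simpa using b0.mapsTo (by simpa using hz)
      have inj0 : ∀ z w, z ∈ G0.V → w ∈ G0.V → f0 z = f0 w → z = w := fun z w hz hw h =>
        b0.injOn (by simpa using hz) (by simpa using hw) h
      have surj0 : ∀ w, w ∈ H0.V → ∃ z, z ∈ G0.V ∧ f0 z = w := by
        intro w hw
        obtain ⟨z, hz, hfz⟩ := b0.surjOn (by simpa using hw)
        exact ⟨z, by simpa using hz, hfz⟩
      classical
      refine ⟨fun z => if z = x then y else if z = y0 then y1 else f0 z, ?_⟩
      set f : Label → Label := fun z => if z = x then y else if z = y0 then y1 else f0 z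
        with hf
      have fx : f x = y := by simp [hf]
      have fy0 : f y0 = y1 := by
        by_cases h : y0 = x
        · exact absurd h.symm hxy0
        · simp [hf, h]
      have fG0 : ∀ z, z ∈ G0.V → f z = f0 z := by
        intro z hz
        have hzx : z ≠ x := fun h => hx0 (h ▸ hz)
        by_cases hzy : z = y0
        · subst hzy
          rw [fy0]
          exact ((r0 z hz).mpr rfl).symm
        · simp [hf, hzx, hzy]
      refine ⟨⟨?_, ?_, ?_⟩, ?_, ?_, ?_⟩
      · -- MapsTo
        intro z hz
        simp only [Finset.coe_insert, Set.mem_insert_iff, Finset.mem_coe] at hz ⊢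
        rcases hz with h | h | h
        · subst h; simp [fx]
        · subst h; simp [fy0]
        · simp [fG0 z h, map0 z h]
      · -- InjOn
        intro z hz w hw hzw
        simp only [Finset.coe_insert, Set.mem_insert_iff, Finset.mem_coe] at hz hw
        have hy1H : y ∉ H0.V := hy0
        have classify : ∀ a, a = x ∨ a = y0 ∨ a ∈ G0.V →
            (a = x) ∨ (a ∈ G0.V) ∨ (a = y0 ∧ a ∉ G0.V) := by
          intro a ha
          by_cases hg : a ∈ G0.V
          · exact Or.inr (Or.inl hg)
          · rcases ha with h | h | h
            · exact Or.inl h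
            · exact Or.inr (Or.inr ⟨h, hg⟩)
            · exact absurd h hg
        rcases classify z hz with h1 | h1 | h1 <;> rcases classify w hw with h2 | h2 | h2
        · rw [h1, h2]
        · exfalso; rw [h1, fx, fG0 w h2] at hzw
          exact hy1H (hzw ▸ map0 w h2)
        · exfalso; rw [h1, fx, h2.1, fy0] at hzw
          exact hyy1 hzw
        · exfalso; rw [h2, fx, fG0 z h1] at hzw
          exact hy1H (hzw ▸ map0 z h1)
        · exact inj0 z w h1 h2 (by rwa [fG0 z h1, fG0 w h2] at hzw)
        · rw [fG0 z h1, h2.1, fy0] at hzw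
          have := (r0 z h1).mp hzw
          rw [this, h2.1]
        · exfalso; rw [h1.1, fy0, h2, fx] at hzw
          exact hyy1 hzw.symm
        · rw [h1.1, fy0, fG0 w h2] at hzw
          have := (r0 w h2).mp hzw.symm
          rw [h1.1, this]
        · rw [h1.1, h2.1]
      · -- SurjOn
        intro w hw
        simp only [Finset.coe_insert, Set.mem_insert_iff, Finset.mem_coe] at hw ⊢
        rcases hw with h | h | h
        · exact ⟨x, Or.inl rfl, h ▸ fx⟩
        · exact ⟨y0, Or.inr (Or.inl rfl), h ▸ fy0⟩
        · obtain ⟨z, hz, hfz⟩ := surj0 w h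
          exact ⟨z, Or.inr (Or.inr hz), (fG0 z hz).trans hfz⟩
      · -- edges
        intro u hu v hv
        simp only [Finset.mem_insert] at hu hv
        have epG0 := labT_endpoints hG0
        have epH0 := labT_endpoints hH0
        constructor
        · intro h
          simp only [Finset.mem_insert] at h ⊢
          rcases h with h | h
          · have h1 : u = y0 := (Prod.ext_iff.mp h).1
            have h2 : v = x := (Prod.ext_iff.mp h).2
            left; rw [h1, h2, fx, fy0]
          · have hu0 := (epG0 u v h).1
            have hv0 := (epG0 u v h).2
            right; rw [fG0 u hu0, fG0 v hv0]
            exact (e0 u hu0 v hv0).mp h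
        · intro h
          simp only [Finset.mem_insert] at h ⊢
          rcases h with h | h
          · have hfu : f u = y1 := (Prod.ext_iff.mp h).1
            have hfv : f v = y := (Prod.ext_iff.mp h).2
            have hvx : v = x := by
              rcases hv with h' | h' | h'
              · exact h'
              · exfalso; rw [h', fy0] at hfv; exact hyy1 hfv.symm
              · exfalso; rw [fG0 v h'] at hfv; exact hy0 (hfv ▸ map0 v h')
            have huy0 : u = y0 := by
              rcases hu with h' | h' | h'
              · exfalso; rw [h', fx] at hfu; exact hyy1 hfu
              · exact h'
              · rw [fG0 u h'] at hfu; exact (r0 u h').mp hfu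
            left; rw [hvx, huy0]
          · have hfu0 : f u ∈ H0.V := (epH0 _ _ h).1
            have hfv0 : f v ∈ H0.V := (epH0 _ _ h).2
            have hu0 : u ∈ G0.V := by
              rcases hu with h' | h' | h'
              · exfalso; rw [h', fx] at hfu0; exact hy0 hfu0
              · by_cases hg : u ∈ G0.V
                · exact hg
                · exfalso; rw [h', fy0] at hfu0
                  exact (h' ▸ hg) (m0.mpr hfu0)
              · exact h'
            have hv0 : v ∈ G0.V := by
              rcases hv with h' | h' | h'
              · exfalso; rw [h', fx] at hfv0; exact hy0 hfv0
              · by_cases hg : v ∈ G0.V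
                · exact hg
                · exfalso; rw [h', fy0] at hfv0
                  exact (h' ▸ hg) (m0.mpr hfv0)
              · exact h'
            rw [fG0 u hu0, fG0 v hv0] at h
            right; exact (e0 u hu0 v hv0).mpr h
      · -- labels
        intro v hv
        simp only [Finset.mem_insert] at hv
        show G0.L v = H0.L (f v)
        by_cases hg : v ∈ G0.V
        · rw [fG0 v hg]; exact l0 v hg
        · rw [labT_L_out hG0 v hg]
          rcases hv with h | h | h
          · rw [h, fx, labT_L_out hH0 y hy0]
          · rw [h, fy0, labT_L_out hH0 y1 (fun hh => (h ▸ hg) (m0.mpr hh))]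
          · exact absurd h hg
      · -- root condition
        intro z hz
        simp only [Finset.mem_insert] at hz
        constructor
        · intro h
          rcases hz with h' | h' | h'
          · exact h'
          · exfalso; rw [h', fy0] at h; exact hyy1 h.symm
          · exfalso; rw [fG0 z h'] at h; exact hy0 (h ▸ map0 z h')
        · intro h; exact h ▸ fx

/-- Graph-level invariance of the translation under the comma congruence. -/
lemma nequiv_labT {X Y : NSeq} (h : NEquiv X Y) :
    ∀ (x : Label) (G : LGraph), LabT x X G ↔ LabT x Y G := by
  induction h with
  | refl X => intro x G; rfl
  | symm h ih => intro x G; exact (ih x G).symm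
  | trans h1 h2 ih1 ih2 => intro x G; exact (ih1 x G).trans (ih2 x G)
  | comm X Y =>
      intro x G
      constructor
      · intro h
        cases h with
        | comma h1 h2 hi =>
          rename_i G1 G2
          have h' := LabT.comma h2 h1 (by rwa [Finset.inter_comm] at hi)
          have heq : G2.union G1 = G1.union G2 :=
            lg_ext (Finset.union_comm _ _) (Finset.union_comm _ _)
              (funext fun z => add_comm _ _)
          rwa [heq] at h'
      · intro h
        cases h with
        | comma h1 h2 hi =>
          rename_i G1 G2
          have h' := LabT.comma h2 h1 (by rwa [Finset.inter_comm] at hi)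
          have heq : G2.union G1 = G1.union G2 :=
            lg_ext (Finset.union_comm _ _) (Finset.union_comm _ _)
              (funext fun z => add_comm _ _)
          rwa [heq] at h'
  | assoc X Y Z =>
      intro x G
      constructor
      · intro h
        cases h with
        | comma h12 h3 hi =>
          rename_i G12 G3
          cases h12 with
          | comma h1 h2 hi' =>
            rename_i G1 G2
            have c1 : G2.V ∩ G3.V ⊆ {x} := by
              intro z hz
              simp only [Finset.mem_inter] at hz
              exact hi (by simp [LGraph.union, Finset.mem_inter, hz.1, hz.2])
            have h23 := LabT.comma h2 h3 c1
            have c2 : G1.V ∩ (G2.union G3).V ⊆ {x} := by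
              intro z hz
              simp only [Finset.mem_inter, LGraph.union, Finset.mem_union] at hz
              rcases hz.2 with h' | h'
              · exact hi' (Finset.mem_inter.mpr ⟨hz.1, h'⟩)
              · exact hi (by simp [LGraph.union, Finset.mem_inter, hz.1, h'])
            have h' := LabT.comma h1 h23 c2
            have heq : G1.union (G2.union G3) = (G1.union G2).union G3 :=
              lg_ext (Finset.union_assoc _ _ _).symm (Finset.union_assoc _ _ _).symm
                (funext fun z => (add_assoc _ _ _).symm)
            rwa [heq] at h'
      · intro h
        cases h with
        | comma h1 h23 hi =>
          rename_i G1 G23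
          cases h23 with
          | comma h2 h3 hi' =>
            rename_i G2 G3
            have c1 : G1.V ∩ G2.V ⊆ {x} := by
              intro z hz
              simp only [Finset.mem_inter] at hz
              exact hi (by simp [LGraph.union, Finset.mem_inter, hz.1, hz.2])
            have h12 := LabT.comma h1 h2 c1
            have c2 : (G1.union G2).V ∩ G3.V ⊆ {x} := by
              intro z hz
              simp only [Finset.mem_inter, LGraph.union, Finset.mem_union] at hz
              rcases hz.1 with h' | h'
              · exact hi (by simp [LGraph.union, Finset.mem_inter, h', hz.2])
              · exact hi' (Finset.mem_inter.mpr ⟨h', hz.2⟩)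
            have h' := LabT.comma h12 h3 c2
            have heq : (G1.union G2).union G3 = G1.union (G2.union G3) :=
              lg_ext (Finset.union_assoc _ _ _) (Finset.union_assoc _ _ _)
                (funext fun z => add_assoc _ _ _)
            rwa [heq] at h'
  | unit X =>
      intro x G
      constructor
      · intro h
        cases h with
        | comma h1 h2 hi =>
          rename_i G1 G2
          cases h2
          have heq : G1.union ⟨∅, ∅, fun _ => 0⟩ = G1 :=
            lg_ext (Finset.union_empty _) (Finset.union_empty _)
              (funext fun z => add_zero _)
          rwa [heq]
      · intro h
        have h2 : LabT x NSeq.empty ⟨∅, ∅, fun _ => 0⟩ := LabT.empty x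
        have h' := LabT.comma h h2 (by simp)
        have heq : G.union ⟨∅, ∅, fun _ => 0⟩ = G :=
          lg_ext (Finset.union_empty _) (Finset.union_empty _)
            (funext fun z => add_zero _)
        rwa [heq] at h'
  | commaCongr h1 h2 ih1 ih2 =>
      intro x G
      constructor
      · intro h
        cases h with
        | comma ha hb hi =>
          exact LabT.comma ((ih1 x _).mp ha) ((ih2 x _).mp hb) hi
      · intro h
        cases h with
        | comma ha hb hi =>
          exact LabT.comma ((ih1 x _).mpr ha) ((ih2 x _).mpr hb) hi
  | whiteCongr h ih =>
      intro x G
      constructor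
      · intro hh
        cases hh with
        | white h0 hx hxy => exact LabT.white ((ih _ _).mp h0) hx hxy
      · intro hh
        cases hh with
        | white h0 hx hxy => exact LabT.white ((ih _ _).mpr h0) hx hxy
  | blackCongr h ih =>
      intro x G
      constructor
      · intro hh
        cases hh with
        | black h0 hx hxy => exact LabT.black ((ih _ _).mp h0) hx hxy
      · intro hh
        cases hh with
        | black h0 hx hxy => exact LabT.black ((ih _ _).mpr h0) hx hxy

/-- Display derivations preserve the graph exactly (only the root moves). -/
lemma displayDeriv_labT {X Z : NSeq} (h : DisplayDeriv X Z) :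
    ∀ (x : Label) (G : LGraph), LabT x X G → ∃ z : Label, LabT z Z G := by
  induction h with
  | refl X => intro x G h; exact ⟨x, h⟩
  | equiv he hd ih =>
      intro x G h
      exact ih x G ((nequiv_labT he x G).mp h)
  | @rf Xr Yr Zr hd ih =>
      intro x G h
      cases h with
      | comma h1 h2 hi =>
        rename_i G1 G2
        cases h2 with
        | @white _ y' _ G0 h0 hx0 hxy' =>
          -- hi : G1.V ∩ (insert x (insert y' G0.V)) ⊆ {x}
          have hy'G1 : y' ∉ G1.V := by
            intro hin
            have : y' = x := by
              have := hi (Finset.mem_inter.mpr ⟨hin, by simp⟩)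
              simpa using this
            exact hxy' this.symm
          have hb : LabT y' Xr.black
              ⟨insert y' (insert x G1.V), insert (x, y') G1.E, G1.L⟩ :=
            LabT.black h1 hy'G1 (fun h => hxy' h.symm)
          have hcond : (insert y' (insert x G1.V) : Finset Label) ∩ G0.V ⊆ {y'} := by
            intro z hz
            simp only [Finset.mem_inter, Finset.mem_insert] at hz
            rcases hz.1 with h' | h' | h'
            · simp [h']
            · exact absurd (h' ▸ hz.2) hx0
            · exfalso
              have : z = x := by
                have := hi (Finset.mem_inter.mpr ⟨h', by simp [hz.2]⟩)
                simpa using this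
              exact hx0 (this ▸ hz.2)
          have h' := LabT.comma hb h0 hcond
          have heq :
              LGraph.union ⟨insert y' (insert x G1.V), insert (x, y') G1.E, G1.L⟩ G0 =
              G1.union ⟨insert x (insert y' G0.V), insert (x, y') G0.E, G0.L⟩ := by
            refine lg_ext ?_ ?_ rfl
            · ext z
              simp only [LGraph.union, Finset.mem_union, Finset.mem_insert]
              tauto
            · ext e
              simp only [LGraph.union, Finset.mem_union, Finset.mem_insert]
              tauto
          rw [heq] at h'
          exact ih y' _ h'
  | @rp Xr Yr Zr hd ih =>
      intro x G h
      cases h with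
      | comma h1 h2 hi =>
        rename_i G1 G2
        cases h2 with
        | @black _ y' _ G0 h0 hx0 hxy' =>
          have hy'G1 : y' ∉ G1.V := by
            intro hin
            have : y' = x := by
              have := hi (Finset.mem_inter.mpr ⟨hin, by simp⟩)
              simpa using this
            exact hxy' this.symm
          have hb : LabT y' Xr.white
              ⟨insert y' (insert x G1.V), insert (y', x) G1.E, G1.L⟩ :=
            LabT.white h1 hy'G1 (fun h => hxy' h.symm)
          have hcond : (insert y' (insert x G1.V) : Finset Label) ∩ G0.V ⊆ {y'} := by
            intro z hz
            simp only [Finset.mem_inter, Finset.mem_insert] at hz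
            rcases hz.1 with h' | h' | h'
            · simp [h']
            · exact absurd (h' ▸ hz.2) hx0
            · exfalso
              have : z = x := by
                have := hi (Finset.mem_inter.mpr ⟨h', by simp [hz.2]⟩)
                simpa using this
              exact hx0 (this ▸ hz.2)
          have h' := LabT.comma hb h0 hcond
          have heq :
              LGraph.union ⟨insert y' (insert x G1.V), insert (y', x) G1.E, G1.L⟩ G0 =
              G1.union ⟨insert x (insert y' G0.V), insert (y', x) G0.E, G0.L⟩ := by
            refine lg_ext ?_ ?_ rfl
            · ext z
              simp only [LGraph.union, Finset.mem_union, Finset.mem_insert]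
              tauto
            · ext e
              simp only [LGraph.union, Finset.mem_union, Finset.mem_insert]
              tauto
          rw [heq] at h'
          exact ih y' _ h'

/-- Corollary `isoresidcor`: for all labels `x, y` and nested
    sequents `X, Y`, if `X` and `Y` are display equivalent then `𝔏ₓ(X)` and
    `𝔏_y(Y)` are isomorphic labeled graphs. -/
theorem display_equivalent_iso (x y : Label) (X Y : NSeq)
    (hXY : DisplayEquiv X Y) (G H : LGraph)
    (hG : LabT x X G) (hH : LabT y Y H) :
    G.Iso H := by
  obtain ⟨z, hz⟩ := displayDeriv_labT hXY.1 x G hG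
  obtain ⟨f, hb, he, hl, -⟩ := labT_isoRoot Y z y G H hz hH
  exact ⟨f, hb, he, hl⟩
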